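/- arXiv:2210.13754 — 2 statements merged into one kernel-verified Lean document; each statement's English description precedes it below -/
import Mathlib

section
/- Let f : [0, ∞) → ℝ be nonnegative and measurable, let F(x) = ∫₀ˣ f(t) dt, and let p > 1. Then ∫₀^∞ (F(x)/x)^p dx ≤ (p/(p-1))^p ∫₀^∞ f(x)^p dx. -/
open MeasureTheory Set

open scoped ENNReal

lemma lintegral_rpow_Ioc {a x : ℝ} (ha : -1 < a) (hx : 0 < x) :
    ∫⁻ t in Ioc (0:ℝ) x, ENNReal.ofReal t ^ a = ENNReal.ofReal (x ^ (a+1) / (a+1)) := by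
  have h1 : ∀ᵐ t ∂(volume : Measure ℝ), t ∈ Ioc (0:ℝ) x →
      ENNReal.ofReal t ^ a = ENNReal.ofReal (t ^ a) := by
    filter_upwards with t ht
    rw [ENNReal.ofReal_rpow_of_pos ht.1]
  rw [setLIntegral_congr_fun_ae measurableSet_Ioc h1,
      ← ofReal_integral_eq_lintegral_ofReal]
  · congr 1
    rw [← intervalIntegral.integral_of_le hx.le, integral_rpow (Or.inl ha),
        Real.zero_rpow (by linarith : a + 1 ≠ 0), sub_zero]
  · exact (intervalIntegral.intervalIntegrable_rpow' ha (a := 0) (b := x)).1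
  · exact ae_restrict_of_forall_mem measurableSet_Ioc
      (fun t ht => Real.rpow_nonneg ht.1.le a)

lemma lintegral_rpow_Ici {a t : ℝ} (ha : a < -1) (ht : 0 < t) :
    ∫⁻ x in Ici t, ENNReal.ofReal x ^ a = ENNReal.ofReal (-t ^ (a+1) / (a+1)) := by
  rw [← Measure.restrict_congr_set Ioi_ae_eq_Ici]
  have h1 : ∀ᵐ x ∂(volume : Measure ℝ), x ∈ Ioi t →
      ENNReal.ofReal x ^ a = ENNReal.ofReal (x ^ a) := by
    filter_upwards with x hx
    rw [ENNReal.ofReal_rpow_of_pos (ht.trans hx)]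
  rw [setLIntegral_congr_fun_ae measurableSet_Ioi h1,
      ← ofReal_integral_eq_lintegral_ofReal]
  · rw [integral_Ioi_rpow_of_lt ha ht]
  · exact integrableOn_Ioi_rpow_of_lt ha ht
  · exact ae_restrict_of_forall_mem measurableSet_Ioi
      (fun x hx => Real.rpow_nonneg (ht.trans hx).le a)

lemma hardy_swap {g k : ℝ → ℝ≥0∞} (hg : Measurable g) (hk : Measurable k) :
    ∫⁻ x in Ioi (0:ℝ), k x * ∫⁻ t in Ioc (0:ℝ) x, g t
      = ∫⁻ t in Ioi (0:ℝ), g t * ∫⁻ x in Ici t, k x := by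
  set S : Set (ℝ × ℝ) := {z : ℝ × ℝ | 0 < z.2 ∧ z.2 ≤ z.1} with hS
  have hSm : MeasurableSet S :=
    (measurableSet_lt measurable_const measurable_snd).inter
      (measurableSet_le measurable_snd measurable_fst)
  set Φ : ℝ → ℝ → ℝ≥0∞ := fun x t => S.indicator (fun (z : ℝ × ℝ) => k z.1 * g z.2) (x, t) with hΦ
  have hΦm : AEMeasurable (Function.uncurry Φ)
      ((volume.restrict (Ioi (0:ℝ))).prod volume) := by
    have : Function.uncurry Φ = S.indicator (fun (z : ℝ × ℝ) => k z.1 * g z.2) := rfl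
    rw [this]
    exact (((hk.comp measurable_fst).mul (hg.comp measurable_snd)).indicator hSm).aemeasurable
  have step1 : ∫⁻ x in Ioi (0:ℝ), k x * ∫⁻ t in Ioc (0:ℝ) x, g t
      = ∫⁻ x in Ioi (0:ℝ), ∫⁻ t, Φ x t := by
    refine lintegral_congr fun x => ?_
    rw [← lintegral_const_mul _ hg, ← lintegral_indicator measurableSet_Ioc]
    refine lintegral_congr fun t => ?_
    by_cases h : t ∈ Ioc (0:ℝ) x
    · rw [Set.indicator_of_mem h]
      exact (Set.indicator_of_mem (show (x, t) ∈ S from ⟨h.1, h.2⟩) (fun (z : ℝ × ℝ) => k z.1 * g z.2)).symm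
    · rw [Set.indicator_of_notMem h]
      exact (Set.indicator_of_notMem (s := S) (fun hc => h ⟨hc.1, hc.2⟩) (fun (z : ℝ × ℝ) => k z.1 * g z.2)).symm
  have step2 : ∫⁻ x in Ioi (0:ℝ), ∫⁻ t, Φ x t = ∫⁻ t, ∫⁻ x in Ioi (0:ℝ), Φ x t :=
    lintegral_lintegral_swap hΦm
  have step3 : ∫⁻ t, ∫⁻ x in Ioi (0:ℝ), Φ x t
      = ∫⁻ t in Ioi (0:ℝ), g t * ∫⁻ x in Ici t, k x := by
    rw [← lintegral_indicator measurableSet_Ioi]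
    refine lintegral_congr fun t => ?_
    by_cases ht : t ∈ Ioi (0:ℝ)
    · rw [Set.indicator_of_mem ht]
      have hΦt : ∀ x, Φ x t = (Ici t).indicator (fun x => k x * g t) x := by
        intro x
        by_cases h : t ≤ x
        · rw [Set.indicator_of_mem (show x ∈ Ici t from h)]
          exact Set.indicator_of_mem (show (x, t) ∈ S from ⟨ht, h⟩) (fun (z : ℝ × ℝ) => k z.1 * g z.2)
        · rw [Set.indicator_of_notMem (show x ∉ Ici t from h)]
          exact Set.indicator_of_notMem (s := S) (fun hc => h hc.2) (fun (z : ℝ × ℝ) => k z.1 * g z.2)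
      have hinter : Ici t ∩ Ioi (0:ℝ) = Ici t :=
        Set.inter_eq_left.2 (fun x hx => show (0:ℝ) < x from lt_of_lt_of_le ht hx)
      simp_rw [hΦt]
      rw [lintegral_indicator measurableSet_Ici,
          Measure.restrict_restrict measurableSet_Ici, hinter,
          lintegral_mul_const _ hk, mul_comm]
    · rw [Set.indicator_of_notMem ht]
      have h0 : ∀ x, Φ x t = 0 := fun x =>
        Set.indicator_of_notMem (s := S) (fun (hc : (x, t) ∈ S) => ht hc.1) (fun (z : ℝ × ℝ) => k z.1 * g z.2)
      simp [h0]
  rw [step1, step2, step3]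

/-- **Hardy's inequality** on `(0, ∞)` with the sharp constant `(p/(p-1))^p`:
if `f ≥ 0` is measurable and `F x = ∫₀ˣ f`, then for `p > 1`,
`∫₀^∞ (F x / x)^p dx ≤ (p/(p-1))^p ∫₀^∞ f(x)^p dx`. -/
theorem hardy_inequality (f : ℝ → ℝ) (hf : Measurable f) (hf0 : ∀ t, 0 ≤ f t)
    (p : ℝ) (hp : 1 < p) (F : ℝ → ℝ) (hF : ∀ x, F x = ∫ t in Ioc (0 : ℝ) x, f t) :
    ∫⁻ x in Ioi (0 : ℝ), ENNReal.ofReal ((F x / x) ^ p)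
      ≤ ENNReal.ofReal ((p / (p - 1)) ^ p) * ∫⁻ x in Ioi (0 : ℝ), ENNReal.ofReal (f x ^ p) := by
  set q : ℝ := p / (p - 1) with hq
  have hp0 : (0:ℝ) < p := lt_trans one_pos hp
  have hp1 : (0:ℝ) < p - 1 := by linarith
  have hq0 : 0 < q := div_pos hp0 hp1
  have hpq : p.HolderConjugate q := (Real.holderConjugate_iff_eq_conjExponent hp).2 rfl
  set r : ℝ := (p - 1) / p with hr
  have hr0 : 0 < r := div_pos hp1 hp0
  have hq_inv : 1 / q = r := by rw [hq, hr, one_div_div]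
  have hqr : q = r⁻¹ := by rw [hq, hr, inv_div]
  set a : ℝ := (p - 1) / p ^ 2 with ha
  have hap : a * p = r := by rw [ha, hr]; field_simp
  have haq : a * q = 1 / p := by rw [ha, hq]; field_simp
  set β : ℝ := (1 - 2 * p) / p with hβ
  have hβlt : β < -1 := by rw [hβ, div_lt_iff₀ hp0]; linarith
  set g : ℝ → ℝ≥0∞ := fun t => ENNReal.ofReal (f t ^ p) * ENNReal.ofReal t ^ r with hgdef
  set k : ℝ → ℝ≥0∞ := fun x => ENNReal.ofReal x ^ β with hkdef
  have hfm : Measurable fun t => ENNReal.ofReal (f t ^ p) :=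
    ENNReal.measurable_ofReal.comp (hf.pow measurable_const)
  have htr : Measurable fun t : ℝ => ENNReal.ofReal t ^ r :=
    ENNReal.measurable_ofReal.pow measurable_const
  have hg : Measurable g := hfm.mul htr
  have hk : Measurable k := ENNReal.measurable_ofReal.pow measurable_const
  set A : ℝ → ℝ≥0∞ := fun x => ∫⁻ t in Ioc (0:ℝ) x, g t with hAdef
  set C1 : ℝ≥0∞ := ENNReal.ofReal q ^ (p - 1) with hC1
  have hC1top : C1 ≠ ∞ :=
    (ENNReal.rpow_lt_top_of_nonneg (by linarith) ENNReal.ofReal_ne_top).ne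
  have hφ : Measurable fun t : ℝ => ENNReal.ofReal (f t) * ENNReal.ofReal t ^ a :=
    (ENNReal.measurable_ofReal.comp hf).mul (ENNReal.measurable_ofReal.pow measurable_const)
  have hψ : Measurable fun t : ℝ => ENNReal.ofReal t ^ (-a) :=
    ENNReal.measurable_ofReal.pow measurable_const
  -- pointwise key estimate
  have key : ∀ x ∈ Ioi (0:ℝ), ENNReal.ofReal ((F x / x) ^ p) ≤ C1 * (k x * A x) := by
    intro x hx
    rw [mem_Ioi] at hx
    have hFx0 : 0 ≤ F x := by
      rw [hF x]; exact setIntegral_nonneg measurableSet_Ioc fun t _ => hf0 t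
    -- Hölder step
    have h1 : ENNReal.ofReal (F x) ≤ ∫⁻ t in Ioc (0:ℝ) x, ENNReal.ofReal (f t) := by
      rw [hF x]
      calc ENNReal.ofReal (∫ t in Ioc (0:ℝ) x, f t)
          ≤ ‖∫ t in Ioc (0:ℝ) x, f t‖₊ := Real.ofReal_le_enorm _
        _ ≤ ∫⁻ t in Ioc (0:ℝ) x, ‖f t‖₊ := enorm_integral_le_lintegral_enorm _
        _ = ∫⁻ t in Ioc (0:ℝ) x, ENNReal.ofReal (f t) :=
            lintegral_congr fun t => Real.enorm_eq_ofReal (hf0 t)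
    have h2 : ∫⁻ t in Ioc (0:ℝ) x, ENNReal.ofReal (f t)
        = ∫⁻ t in Ioc (0:ℝ) x,
            ((fun t => ENNReal.ofReal (f t) * ENNReal.ofReal t ^ a)
              * fun t => ENNReal.ofReal t ^ (-a)) t := by
      refine setLIntegral_congr_fun_ae measurableSet_Ioc ?_
      filter_upwards with t ht
      have ht0 : ENNReal.ofReal t ≠ 0 := (ENNReal.ofReal_pos.2 ht.1).ne'
      simp only [Pi.mul_apply]
      rw [mul_assoc, ← ENNReal.rpow_add _ _ ht0 ENNReal.ofReal_ne_top,
        add_neg_cancel, ENNReal.rpow_zero, mul_one]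
    have h3 := ENNReal.lintegral_mul_le_Lp_mul_Lq (volume.restrict (Ioc (0:ℝ) x)) hpq
      hφ.aemeasurable hψ.aemeasurable
    have h4 : ∫⁻ t in Ioc (0:ℝ) x,
        ((fun t : ℝ => ENNReal.ofReal (f t) * ENNReal.ofReal t ^ a) t) ^ p = A x := by
      refine setLIntegral_congr_fun_ae measurableSet_Ioc ?_
      filter_upwards with t ht
      rw [ENNReal.mul_rpow_of_nonneg _ _ hp0.le, ← ENNReal.rpow_mul, hap,
        ENNReal.ofReal_rpow_of_nonneg (hf0 t) hp0.le]
    have hp_inv : (-1:ℝ) < -(1/p) := by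
      rw [neg_lt, neg_neg, one_div]
      exact inv_lt_one_of_one_lt₀ hp
    have h5 : ∫⁻ t in Ioc (0:ℝ) x, ((fun t : ℝ => ENNReal.ofReal t ^ (-a)) t) ^ q
        = ENNReal.ofReal (q * x ^ (1/q)) := by
      have e : ∫⁻ t in Ioc (0:ℝ) x, ((fun t : ℝ => ENNReal.ofReal t ^ (-a)) t) ^ q
          = ∫⁻ t in Ioc (0:ℝ) x, ENNReal.ofReal t ^ (-(1/p)) := by
        refine setLIntegral_congr_fun_ae measurableSet_Ioc ?_
        filter_upwards with t ht
        rw [← ENNReal.rpow_mul, neg_mul, haq]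
      have he : -(1/p) + 1 = 1/q := by
        rw [hq_inv, hr]
        field_simp
        ring
      rw [e, lintegral_rpow_Ioc hp_inv hx, he]
      congr 1
      rw [div_eq_mul_inv, one_div, inv_inv, mul_comm]
    have holder : ENNReal.ofReal (F x)
        ≤ A x ^ (1/p) * ENNReal.ofReal (q * x ^ (1/q)) ^ (1/q) := by
      rw [← h4, ← h5]
      exact le_trans h1 (le_of_le_of_eq (le_of_eq h2) rfl |>.trans h3)
    -- pointwise computation
    have hx0 : ENNReal.ofReal x ≠ 0 := (ENNReal.ofReal_pos.2 hx).ne'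
    have e1 : (A x ^ (1/p)) ^ p = A x := by
      rw [← ENNReal.rpow_mul, one_div, inv_mul_cancel₀ hp0.ne', ENNReal.rpow_one]
    have e2 : (ENNReal.ofReal (q * x ^ (1/q)) ^ (1/q)) ^ p
        = C1 * ENNReal.ofReal x ^ (1/q * (p - 1)) := by
      rw [← ENNReal.rpow_mul, show (1/q) * p = p - 1 by
          rw [one_div, inv_mul_eq_div, hpq.div_conj_eq_sub_one],
        ENNReal.ofReal_mul hq0.le,
        ENNReal.mul_rpow_of_nonneg _ _ (by linarith : (0:ℝ) ≤ p - 1),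
        hC1, ← ENNReal.ofReal_rpow_of_pos hx, ← ENNReal.rpow_mul]
    have e3 : ENNReal.ofReal x ^ (1/q * (p - 1)) * ENNReal.ofReal x ^ (-p)
        = k x := by
      rw [← ENNReal.rpow_add _ _ hx0 ENNReal.ofReal_ne_top, hkdef]
      congr 1
      rw [hq_inv, hr, hβ]
      field_simp
      ring
    calc ENNReal.ofReal ((F x / x) ^ p)
        = ENNReal.ofReal (F x) ^ p * ENNReal.ofReal x ^ (-p) := by
          rw [div_eq_mul_inv, Real.mul_rpow hFx0 (inv_nonneg.2 hx.le),
            Real.inv_rpow hx.le, ← Real.rpow_neg hx.le,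
            ENNReal.ofReal_mul (Real.rpow_nonneg hFx0 p),
            ← ENNReal.ofReal_rpow_of_nonneg hFx0 hp0.le,
            ← ENNReal.ofReal_rpow_of_pos hx]
      _ ≤ (A x ^ (1/p) * ENNReal.ofReal (q * x ^ (1/q)) ^ (1/q)) ^ p
            * ENNReal.ofReal x ^ (-p) :=
          mul_le_mul_left (ENNReal.rpow_le_rpow holder hp0.le) _
      _ = C1 * (k x * A x) := by
          rw [ENNReal.mul_rpow_of_nonneg _ _ hp0.le, e1, e2,
            show A x * (C1 * ENNReal.ofReal x ^ (1/q * (p - 1))) * ENNReal.ofReal x ^ (-p)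
              = C1 * (ENNReal.ofReal x ^ (1/q * (p - 1)) * ENNReal.ofReal x ^ (-p) * A x)
              from by ring, e3]
  -- integrate the key estimate
  have main : ∫⁻ x in Ioi (0:ℝ), ENNReal.ofReal ((F x / x) ^ p)
      ≤ C1 * ∫⁻ x in Ioi (0:ℝ), k x * A x := by
    rw [← lintegral_const_mul' C1 _ hC1top]
    exact lintegral_mono_ae (ae_restrict_of_forall_mem measurableSet_Ioi key)
  have swap : ∫⁻ x in Ioi (0:ℝ), k x * A x
      = ∫⁻ t in Ioi (0:ℝ), g t * ∫⁻ x in Ici t, k x := hardy_swap hg hk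
  have eval : ∫⁻ t in Ioi (0:ℝ), g t * ∫⁻ x in Ici t, k x
      = ENNReal.ofReal q * ∫⁻ t in Ioi (0:ℝ), ENNReal.ofReal (f t ^ p) := by
    rw [← lintegral_const_mul' _ _ ENNReal.ofReal_ne_top]
    refine setLIntegral_congr_fun_ae measurableSet_Ioi ?_
    filter_upwards with t ht
    rw [mem_Ioi] at ht
    have ht0 : ENNReal.ofReal t ≠ 0 := (ENNReal.ofReal_pos.2 ht).ne'
    have hβ1 : β + 1 = -r := by rw [hβ, hr]; field_simp; ring
    have hkint : ∫⁻ x in Ici t, k x = ENNReal.ofReal (q * t ^ (-r)) := by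
      rw [hkdef, lintegral_rpow_Ici hβlt ht, hβ1]
      congr 1
      rw [neg_div_neg_eq, hqr, div_eq_mul_inv, mul_comm]
    rw [hkint, ENNReal.ofReal_mul hq0.le, ← ENNReal.ofReal_rpow_of_pos ht, hgdef]
    calc ENNReal.ofReal (f t ^ p) * ENNReal.ofReal t ^ r
          * (ENNReal.ofReal q * ENNReal.ofReal t ^ (-r))
        = ENNReal.ofReal q * ENNReal.ofReal (f t ^ p)
            * (ENNReal.ofReal t ^ r * ENNReal.ofReal t ^ (-r)) := by ring
      _ = ENNReal.ofReal q * ENNReal.ofReal (f t ^ p) := by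
          rw [← ENNReal.rpow_add _ _ ht0 ENNReal.ofReal_ne_top, add_neg_cancel,
            ENNReal.rpow_zero, mul_one]
  have hconst : C1 * ENNReal.ofReal q = ENNReal.ofReal (q ^ p) := by
    have h' : ENNReal.ofReal q ^ (p - 1) * ENNReal.ofReal q ^ (1:ℝ)
        = ENNReal.ofReal q ^ p := by
      rw [← ENNReal.rpow_add _ _ (ENNReal.ofReal_pos.2 hq0).ne' ENNReal.ofReal_ne_top]
      norm_num
    rw [hC1, ← ENNReal.ofReal_rpow_of_nonneg hq0.le hp0.le, ← h', ENNReal.rpow_one]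
  calc ∫⁻ x in Ioi (0:ℝ), ENNReal.ofReal ((F x / x) ^ p)
      ≤ C1 * ∫⁻ x in Ioi (0:ℝ), k x * A x := main
    _ = C1 * (ENNReal.ofReal q * ∫⁻ t in Ioi (0:ℝ), ENNReal.ofReal (f t ^ p)) := by
        rw [swap, eval]
    _ = ENNReal.ofReal (q ^ p) * ∫⁻ x in Ioi (0:ℝ), ENNReal.ofReal (f x ^ p) := by
        rw [← mul_assoc, hconst]
end

section
/- The function h(r) = 1/tanh(r) - 1/r satisfies 0 ≤ h'(r) = 1/r² - 1/sinh²(r) ≤ 1/3 for all r > 0, with h'(r) → 1/3 as r → 0, and the function k(r) = (1/r - 1/tanh(r))·(1/sinh(r)) satisfies |k(r)| ≤ 1/3 for all r > 0. -/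
open Filter Set Topology

private lemma nonneg_of_deriv_nonneg (f f' : ℝ → ℝ)
    (hf : ∀ x : ℝ, HasDerivAt f (f' x) x) (h0 : f 0 = 0)
    (hd : ∀ x : ℝ, 0 ≤ x → 0 ≤ f' x) : ∀ x : ℝ, 0 ≤ x → 0 ≤ f x := by
  intro x hx
  have hmono : MonotoneOn f (Ici (0:ℝ)) := by
    apply monotoneOn_of_deriv_nonneg (convex_Ici 0)
      (fun y _ => (hf y).continuousAt.continuousWithinAt)
      (fun y _ => (hf y).differentiableAt.differentiableWithinAt)
    intro y hy
    rw [interior_Ici, mem_Ioi] at hy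
    rw [(hf y).deriv]
    exact hd y hy.le
  have := hmono (self_mem_Ici) hx hx
  rwa [h0] at this

private lemma sinh_le_mul_cosh : ∀ x : ℝ, 0 ≤ x → Real.sinh x ≤ x * Real.cosh x := by
  have h := nonneg_of_deriv_nonneg (fun x => x * Real.cosh x - Real.sinh x)
      (fun x => x * Real.sinh x)
      (fun x => by
        have := ((hasDerivAt_id x).mul (Real.hasDerivAt_cosh x)).sub (Real.hasDerivAt_sinh x)
        refine this.congr_deriv ?_; simp only [id_eq]; ring)
      (by simp)
      (fun x hx => mul_nonneg hx (Real.sinh_nonneg_iff.mpr hx))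
  intro x hx
  have := h x hx
  linarith

private lemma one_add_sq_le_cosh : ∀ x : ℝ, 0 ≤ x → 1 + x ^ 2 / 2 ≤ Real.cosh x := by
  have h := nonneg_of_deriv_nonneg (fun x => Real.cosh x - 1 - x ^ 2 / 2)
      (fun x => Real.sinh x - x)
      (fun x => by
        have := ((Real.hasDerivAt_cosh x).sub_const 1).sub
          ((hasDerivAt_pow 2 x).div_const 2)
        refine this.congr_deriv ?_; ring)
      (by simp)
      (fun x hx => by
        have : x ≤ Real.sinh x := Real.self_le_sinh_iff.mpr hx
        linarith)
  intro x hx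
  have := h x hx
  linarith

private lemma cubic_le_sinh : ∀ x : ℝ, 0 ≤ x → x + x ^ 3 / 6 ≤ Real.sinh x := by
  have h := nonneg_of_deriv_nonneg (fun x => Real.sinh x - x - x ^ 3 / 6)
      (fun x => Real.cosh x - 1 - x ^ 2 / 2)
      (fun x => by
        have := ((Real.hasDerivAt_sinh x).sub (hasDerivAt_id x)).sub
          ((hasDerivAt_pow 3 x).div_const 6)
        refine this.congr_deriv ?_; push_cast; ring)
      (by simp)
      (fun x hx => by have := one_add_sq_le_cosh x hx; linarith)
  intro x hx
  have := h x hx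
  linarith

private lemma langevin_ineq : ∀ x : ℝ, 0 ≤ x →
    0 ≤ (3 + x ^ 2) * Real.sinh x - 3 * x * Real.cosh x := by
  apply nonneg_of_deriv_nonneg _ (fun x => x ^ 2 * Real.cosh x - x * Real.sinh x)
  · intro x
    have := (((hasDerivAt_pow 2 x).const_add 3).mul (Real.hasDerivAt_sinh x)).sub
      ((((hasDerivAt_id x).const_mul 3).mul (Real.hasDerivAt_cosh x)))
    refine this.congr_deriv ?_; simp only [id_eq]; push_cast; ring
  · simp
  · intro x hx
    have h := sinh_le_mul_cosh x hx
    nlinarith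

private lemma G3_nonneg : ∀ x : ℝ, 0 ≤ x →
    0 ≤ 6 * x * Real.cosh x + (x ^ 2 - 6) * Real.sinh x := by
  apply nonneg_of_deriv_nonneg _ (fun x => x ^ 2 * Real.cosh x + 8 * x * Real.sinh x)
  · intro x
    have := ((((hasDerivAt_id x).const_mul 6).mul (Real.hasDerivAt_cosh x))).add
      (((hasDerivAt_pow 2 x).sub_const 6).mul (Real.hasDerivAt_sinh x))
    refine this.congr_deriv ?_; simp only [id_eq]; push_cast; ring
  · simp
  · intro x hx
    have h1 : 0 ≤ Real.sinh x := Real.sinh_nonneg_iff.mpr hx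
    have h2 : (0:ℝ) < Real.cosh x := Real.cosh_pos x
    nlinarith

private lemma G2_nonneg : ∀ x : ℝ, 0 ≤ x →
    0 ≤ (x ^ 2 - 10) * Real.cosh x + 4 * x * Real.sinh x + 10 := by
  apply nonneg_of_deriv_nonneg _
    (fun x => 6 * x * Real.cosh x + (x ^ 2 - 6) * Real.sinh x)
  · intro x
    have := ((((hasDerivAt_pow 2 x).sub_const 10).mul (Real.hasDerivAt_cosh x)).add
      (((hasDerivAt_id x).const_mul 4).mul (Real.hasDerivAt_sinh x))).add_const 10
    refine this.congr_deriv ?_; simp only [id_eq]; push_cast; ring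
  · simp
  · exact G3_nonneg

private lemma G1_nonneg : ∀ x : ℝ, 0 ≤ x →
    0 ≤ 2 * x * Real.cosh x + (x ^ 2 - 12) * Real.sinh x + 10 * x := by
  apply nonneg_of_deriv_nonneg _
    (fun x => (x ^ 2 - 10) * Real.cosh x + 4 * x * Real.sinh x + 10)
  · intro x
    have := ((((hasDerivAt_id x).const_mul 2).mul (Real.hasDerivAt_cosh x)).add
      (((hasDerivAt_pow 2 x).sub_const 12).mul (Real.hasDerivAt_sinh x))).add
      ((hasDerivAt_id x).const_mul 10)
    refine this.congr_deriv ?_; simp only [id_eq]; push_cast; ring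
  · simp
  · exact G2_nonneg

private lemma G0_nonneg : ∀ x : ℝ, 0 ≤ x →
    0 ≤ (x ^ 2 - 12) * Real.cosh x + 5 * x ^ 2 + 12 := by
  apply nonneg_of_deriv_nonneg _
    (fun x => 2 * x * Real.cosh x + (x ^ 2 - 12) * Real.sinh x + 10 * x)
  · intro x
    have := ((((hasDerivAt_pow 2 x).sub_const 12).mul (Real.hasDerivAt_cosh x)).add
      ((hasDerivAt_pow 2 x).const_mul 5)).add_const 12
    refine this.congr_deriv ?_; push_cast; ring
  · simp
  · exact G1_nonneg

/-- key: `3 sinh² r ≤ r² sinh² r + 3 r²` -/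
private lemma key_upper (r : ℝ) (hr : 0 ≤ r) :
    3 * Real.sinh r ^ 2 ≤ r ^ 2 * Real.sinh r ^ 2 + 3 * r ^ 2 := by
  have h := G0_nonneg (2 * r) (by linarith)
  rw [Real.cosh_two_mul, Real.cosh_sq] at h
  nlinarith

/-- **Pointwise bounds on `d_{A_{BPS}} Φ_{BPS}`**, reduced to elementary inequalities:
the function `h(r) = 1/tanh(r) - 1/r` has derivative `h'(r) = 1/r² - 1/sinh²(r)` on
`(0,∞)`, with `0 ≤ h'(r) ≤ 1/3` and `h'(r) → 1/3` as `r → 0⁺`; and the function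
`k(r) = (1/r - 1/tanh(r)) / sinh(r)` satisfies `|k(r)| ≤ 1/3` for all `r > 0`. -/
theorem bps_derivative_bounds :
    (∀ r : ℝ, 0 < r →
      HasDerivAt (fun s : ℝ => 1 / Real.tanh s - 1 / s)
        (1 / r ^ 2 - 1 / Real.sinh r ^ 2) r) ∧
    (∀ r : ℝ, 0 < r →
      0 ≤ 1 / r ^ 2 - 1 / Real.sinh r ^ 2 ∧ 1 / r ^ 2 - 1 / Real.sinh r ^ 2 ≤ 1 / 3) ∧
    Tendsto (fun r : ℝ => 1 / r ^ 2 - 1 / Real.sinh r ^ 2)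
      (nhdsWithin 0 (Ioi 0)) (nhds (1 / 3)) ∧
    (∀ r : ℝ, 0 < r →
      |(1 / r - 1 / Real.tanh r) * (1 / Real.sinh r)| ≤ 1 / 3) := by
  refine ⟨?_, ?_, ?_, ?_⟩
  · -- derivative
    intro r hr
    have hs : Real.sinh r ≠ 0 := (Real.sinh_pos_iff.mpr hr).ne'
    have hfun : (fun s : ℝ => 1 / Real.tanh s - 1 / s)
        = (fun s : ℝ => Real.cosh s / Real.sinh s - 1 / s) := by
      funext s
      rw [Real.tanh_eq_sinh_div_cosh, one_div, inv_div]
    rw [hfun]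
    have h1 : HasDerivAt (fun s : ℝ => Real.cosh s / Real.sinh s)
        ((Real.sinh r * Real.sinh r - Real.cosh r * Real.cosh r) / Real.sinh r ^ 2) r :=
      (Real.hasDerivAt_cosh r).div (Real.hasDerivAt_sinh r) hs
    have h2 : HasDerivAt (fun s : ℝ => 1 / s) (-(1 / r ^ 2)) r := by
      simpa [one_div] using hasDerivAt_inv hr.ne'
    have h3 := h1.sub h2
    refine h3.congr_deriv ?_
    have hid : Real.cosh r ^ 2 - Real.sinh r ^ 2 = 1 := Real.cosh_sq_sub_sinh_sq r
    have he : Real.sinh r * Real.sinh r - Real.cosh r * Real.cosh r = -1 := by nlinarith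
    rw [he]
    ring
  · -- bounds
    intro r hr
    have hs : 0 < Real.sinh r := Real.sinh_pos_iff.mpr hr
    have hrs : r < Real.sinh r := Real.self_lt_sinh_iff.mpr hr
    constructor
    · have h1 : 1 / Real.sinh r ^ 2 ≤ 1 / r ^ 2 := by
        apply one_div_le_one_div_of_le (by positivity)
        nlinarith
      linarith
    · have hkey := key_upper r hr.le
      have he : 1 / r ^ 2 - 1 / Real.sinh r ^ 2
          = (Real.sinh r ^ 2 - r ^ 2) / (r ^ 2 * Real.sinh r ^ 2) := by
        field_simp
      rw [he, div_le_div_iff₀ (mul_pos (pow_pos hr 2) (pow_pos hs 2)) (by norm_num)]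
      nlinarith
  · -- limit
    have hlow : ∀ r ∈ Ioi (0:ℝ),
        1 / (3 + r ^ 2) ≤ 1 / r ^ 2 - 1 / Real.sinh r ^ 2 := by
      intro r hr
      rw [mem_Ioi] at hr
      have hs : 0 < Real.sinh r := Real.sinh_pos_iff.mpr hr
      have h6 : r + r ^ 3 / 6 ≤ Real.sinh r := cubic_le_sinh r hr.le
      have hr3 : (0:ℝ) ≤ r ^ 3 := pow_nonneg hr.le 3
      have hsq : (r + r ^ 3 / 6) ^ 2 ≤ Real.sinh r ^ 2 :=
        pow_le_pow_left₀ (by linarith) h6 2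
      have he : 1 / r ^ 2 - 1 / Real.sinh r ^ 2
          = (Real.sinh r ^ 2 - r ^ 2) / (r ^ 2 * Real.sinh r ^ 2) := by
        field_simp
      rw [he, div_le_div_iff₀ (by positivity) (mul_pos (pow_pos hr 2) (pow_pos hs 2))]
      nlinarith
    have hup : ∀ r ∈ Ioi (0:ℝ), 1 / r ^ 2 - 1 / Real.sinh r ^ 2 ≤ 1 / 3 := by
      intro r hr
      rw [mem_Ioi] at hr
      have hs : 0 < Real.sinh r := Real.sinh_pos_iff.mpr hr
      have hkey := key_upper r hr.le
      have he : 1 / r ^ 2 - 1 / Real.sinh r ^ 2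
          = (Real.sinh r ^ 2 - r ^ 2) / (r ^ 2 * Real.sinh r ^ 2) := by
        field_simp
      rw [he, div_le_div_iff₀ (mul_pos (pow_pos hr 2) (pow_pos hs 2)) (by norm_num)]
      nlinarith
    have hltend : Tendsto (fun r : ℝ => 1 / (3 + r ^ 2))
        (nhdsWithin 0 (Ioi 0)) (nhds (1 / 3)) := by
      have hc : ContinuousAt (fun r : ℝ => 1 / (3 + r ^ 2)) 0 := by
        apply ContinuousAt.div continuousAt_const (by fun_prop)
        norm_num
      rw [show (1:ℝ)/3 = 1/(3+(0:ℝ)^2) by norm_num]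
      exact tendsto_nhdsWithin_of_tendsto_nhds hc.tendsto
    apply tendsto_of_tendsto_of_tendsto_of_le_of_le' hltend tendsto_const_nhds
    · filter_upwards [self_mem_nhdsWithin] with r hr using hlow r hr
    · filter_upwards [self_mem_nhdsWithin] with r hr using hup r hr
  · -- k bound
    intro r hr
    have hs : 0 < Real.sinh r := Real.sinh_pos_iff.mpr hr
    have hc : 0 < Real.cosh r := Real.cosh_pos r
    have hrs : r < Real.sinh r := Real.self_lt_sinh_iff.mpr hr
    have h1 : Real.sinh r ≤ r * Real.cosh r := sinh_le_mul_cosh r hr.le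
    have hP := langevin_ineq r hr.le
    have he : (1 / r - 1 / Real.tanh r) * (1 / Real.sinh r)
        = (Real.sinh r - r * Real.cosh r) / (r * Real.sinh r ^ 2) := by
      rw [Real.tanh_eq_sinh_div_cosh, one_div (Real.sinh r / Real.cosh r), inv_div]
      rw [div_sub_div _ _ hr.ne' hs.ne', div_mul_div_comm, one_mul]
      rw [show r * Real.sinh r * Real.sinh r = r * Real.sinh r ^ 2 by ring, mul_one]
    rw [he, abs_le]
    constructor
    · rw [neg_le, ← neg_div, div_le_iff₀ (mul_pos hr (pow_pos hs 2))]
      nlinarith [mul_nonneg (mul_nonneg hr.le hs.le) (sub_nonneg.mpr hrs.le)]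
    · have hnp : (Real.sinh r - r * Real.cosh r) / (r * Real.sinh r ^ 2) ≤ 0 :=
        div_nonpos_of_nonpos_of_nonneg (by linarith) (mul_pos hr (pow_pos hs 2)).le
      linarith
end
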